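/- For every integer d ≥ n and every σ ∈ S_n, the series Σ_{r=0}^∞ (−1)^r · h_r(J_1,…,J_n)(σ) / d^{n+r} converges in ℂ and its sum equals the coefficient of σ in the inverse of ∏_{i=1}^n (d·1 + J_i) in the group algebra A. In other words, the coefficients in the 1/d-expansion of the Weingarten function are a_r = (−1)^r h_r(J_1,…,J_n). -/

import Mathlib

/-- The Jucys–Murphy element `J_{i+1}` (1-based: `J_1 = 0`,
`J_i = (1,i) + ⋯ + (i-1,i)`) in the complex group algebra of `S_n`. -/
noncomputable def jm (n : ℕ) (i : Fin n) : MonoidAlgebra ℂ (Equiv.Perm (Fin n)) :=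
  ∑ k ∈ Finset.univ.filter (fun k => k < i),
    MonoidAlgebra.of ℂ (Equiv.Perm (Fin n)) (Equiv.swap k i)

/-- The product `∏_{i=1}^n (d·1 + J_i)` in the group algebra (the JM elements commute,
so the order of the factors is immaterial; we multiply them in increasing order). -/
noncomputable def prodDJ (n : ℕ) (d : ℂ) : MonoidAlgebra ℂ (Equiv.Perm (Fin n)) :=
  ((List.finRange n).map fun i =>
    d • (1 : MonoidAlgebra ℂ (Equiv.Perm (Fin n))) + jm n i).prod

/-- The `r`-th complete homogeneous symmetric polynomial evaluated at the Jucys–Murphy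
elements: `h_r(J_1,…,J_n) = Σ_{i_1 ≤ ⋯ ≤ i_r} J_{i_1} ⋯ J_{i_r}`, the sum running over
all multisets of size `r` (the JM elements commute, so the order of the factors is
immaterial; we multiply them in increasing order). -/
noncomputable def hJM (n r : ℕ) : MonoidAlgebra ℂ (Equiv.Perm (Fin n)) :=
  ∑ m : Sym (Fin n) r, ((Multiset.sort (m : Multiset (Fin n)) (· ≤ ·)).map (jm n)).prod


open Finset MonoidAlgebra

variable {n : ℕ}

/-- coefficientwise multiplication formula over all of the group -/
theorem mul_apply_univ (x y : MonoidAlgebra ℂ (Equiv.Perm (Fin n))) (g : Equiv.Perm (Fin n)) :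
    (x * y).coeff g = ∑ τ : Equiv.Perm (Fin n), x.coeff τ * y.coeff (τ⁻¹ * g) := by
  rw [MonoidAlgebra.coeff_mul_apply_left, Finsupp.sum]
  refine Finset.sum_subset (Finset.subset_univ _) ?_
  intro τ _ hτ
  rw [Finsupp.notMem_support_iff.mp hτ, zero_mul]

noncomputable def normA (x : MonoidAlgebra ℂ (Equiv.Perm (Fin n))) : ℝ :=
  ∑ g : Equiv.Perm (Fin n), ‖x.coeff g‖

theorem normA_nonneg (x : MonoidAlgebra ℂ (Equiv.Perm (Fin n))) : 0 ≤ normA x :=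
  Finset.sum_nonneg fun _ _ => norm_nonneg _

theorem apply_le_normA (x : MonoidAlgebra ℂ (Equiv.Perm (Fin n))) (g : Equiv.Perm (Fin n)) :
    ‖x.coeff g‖ ≤ normA x :=
  Finset.single_le_sum (fun _ _ => norm_nonneg _) (Finset.mem_univ g)

theorem normA_add_le (x y : MonoidAlgebra ℂ (Equiv.Perm (Fin n))) :
    normA (x + y) ≤ normA x + normA y := by
  rw [normA, normA, normA, ← Finset.sum_add_distrib]
  exact Finset.sum_le_sum fun g _ => (by rw [MonoidAlgebra.coeff_add, Finsupp.add_apply]; exact norm_add_le _ _)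

theorem normA_sum_le {ι : Type*} (s : Finset ι) (f : ι → MonoidAlgebra ℂ (Equiv.Perm (Fin n))) :
    normA (∑ i ∈ s, f i) ≤ ∑ i ∈ s, normA (f i) := by
  rw [normA]
  calc ∑ g : Equiv.Perm (Fin n), ‖(∑ i ∈ s, f i).coeff g‖
      ≤ ∑ g : Equiv.Perm (Fin n), ∑ i ∈ s, ‖(f i).coeff g‖ := by
        refine Finset.sum_le_sum fun g _ => ?_
        rw [MonoidAlgebra.coeff_sum, Finsupp.finset_sum_apply]
        exact norm_sum_le _ _
    _ = ∑ i ∈ s, normA (f i) := Finset.sum_comm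

theorem normA_smul (c : ℂ) (x : MonoidAlgebra ℂ (Equiv.Perm (Fin n))) :
    normA (c • x) = ‖c‖ * normA x := by
  rw [normA, normA, Finset.mul_sum]
  refine Finset.sum_congr rfl fun g _ => ?_
  rw [MonoidAlgebra.coeff_smul_apply, smul_eq_mul, norm_mul]

theorem normA_single (g : Equiv.Perm (Fin n)) (c : ℂ) :
    normA (MonoidAlgebra.single g c) = ‖c‖ := by
  rw [normA]
  rw [Finset.sum_eq_single g]
  · simp [MonoidAlgebra.coeff_single, Finsupp.single_apply]
  · intro h _ hh; simp [MonoidAlgebra.coeff_single, Finsupp.single_apply, Ne.symm hh]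
  · simp

theorem normA_one : normA (1 : MonoidAlgebra ℂ (Equiv.Perm (Fin n))) = 1 := by
  have := normA_single (n := n) 1 (1 : ℂ)
  simpa [MonoidAlgebra.one_def] using this

theorem normA_mul_le (x y : MonoidAlgebra ℂ (Equiv.Perm (Fin n))) :
    normA (x * y) ≤ normA x * normA y := by
  calc normA (x * y) = ∑ g : Equiv.Perm (Fin n), ‖∑ τ : Equiv.Perm (Fin n), x.coeff τ * y.coeff (τ⁻¹ * g)‖ := by
        rw [normA]; exact Finset.sum_congr rfl fun g _ => by rw [mul_apply_univ]
    _ ≤ ∑ g : Equiv.Perm (Fin n), ∑ τ : Equiv.Perm (Fin n), ‖x.coeff τ‖ * ‖y.coeff (τ⁻¹ * g)‖ := by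
        refine Finset.sum_le_sum fun g _ => ?_
        refine (norm_sum_le _ _).trans ?_
        exact Finset.sum_le_sum fun τ _ => by rw [norm_mul]
    _ = ∑ τ : Equiv.Perm (Fin n), ‖x.coeff τ‖ * ∑ g : Equiv.Perm (Fin n), ‖y.coeff (τ⁻¹ * g)‖ := by
        rw [Finset.sum_comm]
        exact Finset.sum_congr rfl fun τ _ => by rw [Finset.mul_sum]
    _ = normA x * normA y := by
        rw [normA, normA, Finset.sum_mul]
        refine Finset.sum_congr rfl fun τ _ => ?_
        congr 1
        exact Fintype.sum_bijective (fun g => τ⁻¹ * g)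
          (Group.mulLeft_bijective τ⁻¹) _ _ fun g => rfl

theorem swap_shift {α : Type*} [DecidableEq α] {k i l j : α} (hkj : j ≠ k) (hij : j ≠ i) :
    Equiv.swap k i * Equiv.swap l j = Equiv.swap (Equiv.swap k i l) j * Equiv.swap k i := by
  have h := Equiv.swap_apply_apply (Equiv.swap k i) l j
  rw [Equiv.swap_apply_of_ne_of_ne hkj hij] at h
  rw [h]
  group

theorem filter_lt_card (i : Fin n) : (Finset.univ.filter (fun k => k < i)).card = (i : ℕ) := by
  have : Finset.univ.filter (fun k => k < i) = Finset.Iio i := by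
    ext k; simp
  rw [this, Fin.card_Iio]

theorem normA_jm (i : Fin n) : normA (jm n i) ≤ (i : ℕ) := by
  rw [jm]
  refine (normA_sum_le _ _).trans ?_
  have : ∀ k ∈ Finset.univ.filter (fun k => k < i),
      normA (MonoidAlgebra.of ℂ (Equiv.Perm (Fin n)) (Equiv.swap k i)) = 1 := by
    intro k _
    rw [MonoidAlgebra.of_apply, normA_single, norm_one]
  rw [Finset.sum_congr rfl this, Finset.sum_const, filter_lt_card]
  simp

theorem jm_mul_comm_of_lt {i j : Fin n} (hij : i < j) : jm n i * jm n j = jm n j * jm n i := by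
  rw [jm, jm, Finset.sum_mul_sum, Finset.sum_mul_sum, Finset.sum_comm (s := Finset.univ.filter (fun l => l < j))]
  refine Finset.sum_congr rfl fun k hk => ?_
  have hki : k < i := by simpa using hk
  have hkj : j ≠ k := (hki.trans hij).ne'
  have hij' : j ≠ i := hij.ne'
  refine Finset.sum_nbij' (fun l => Equiv.swap k i l) (fun l => Equiv.swap k i l) ?_ ?_ ?_ ?_ ?_
  · intro l hl
    have hl : l < j := by simpa using hl
    simp only [Finset.mem_filter, Finset.mem_univ, true_and]
    rcases eq_or_ne l k with rfl | h1
    · rw [Equiv.swap_apply_left]; exact hij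
    rcases eq_or_ne l i with rfl | h2
    · rw [Equiv.swap_apply_right]; exact hki.trans hij
    · rw [Equiv.swap_apply_of_ne_of_ne h1 h2]; exact hl
  · intro l hl
    have hl : l < j := by simpa using hl
    simp only [Finset.mem_filter, Finset.mem_univ, true_and]
    rcases eq_or_ne l k with rfl | h1
    · rw [Equiv.swap_apply_left]; exact hij
    rcases eq_or_ne l i with rfl | h2
    · rw [Equiv.swap_apply_right]; exact hki.trans hij
    · rw [Equiv.swap_apply_of_ne_of_ne h1 h2]; exact hl
  · intro l _; exact Equiv.swap_apply_self _ _ _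
  · intro l _; exact Equiv.swap_apply_self _ _ _
  · intro l _
    simp only [MonoidAlgebra.of_apply, MonoidAlgebra.single_mul_single, one_mul]
    rw [swap_shift hkj hij']

theorem jm_commute (i j : Fin n) : Commute (jm n i) (jm n j) := by
  rcases lt_trichotomy i j with h | rfl | h
  · exact jm_mul_comm_of_lt h
  · rfl
  · exact (jm_mul_comm_of_lt h).symm

noncomputable def sprod (n : ℕ) (m : Multiset (Fin n)) : MonoidAlgebra ℂ (Equiv.Perm (Fin n)) :=
  ((Multiset.sort m (· ≤ ·)).map (jm n)).prod

theorem hJM_eq (n r : ℕ) : hJM n r = ∑ μ : Sym (Fin n) r, sprod n (μ : Multiset (Fin n)) := rfl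

theorem commute_jm_sprod (i : Fin n) (m : Multiset (Fin n)) :
    Commute (jm n i) (sprod n m) := by
  refine Commute.list_prod_right _ _ fun x hx => ?_
  obtain ⟨y, _, rfl⟩ := List.mem_map.mp hx
  exact jm_commute i y

theorem sort_cons_top (a : Fin n) (m : Multiset (Fin n)) (h : ∀ x ∈ m, x ≤ a) :
    Multiset.sort (a ::ₘ m) (· ≤ ·) = Multiset.sort m (· ≤ ·) ++ [a] := by
  refine List.Perm.eq_of_pairwise' (Multiset.pairwise_sort _ _) ?_ ?_
  · rw [List.pairwise_append]
    refine ⟨Multiset.pairwise_sort _ _, List.pairwise_singleton _ _, ?_⟩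
    intro x hx y hy
    rw [List.mem_singleton] at hy
    subst hy
    exact h x ((Multiset.mem_sort _).mp hx)
  · rw [← Multiset.coe_eq_coe, Multiset.sort_eq]
    have : (↑(Multiset.sort m (· ≤ ·) ++ [a]) : Multiset (Fin n))
        = ↑(Multiset.sort m (· ≤ ·)) + ↑([a] : List (Fin n)) := by
      exact_mod_cast rfl
    rw [this, Multiset.sort_eq]
    show a ::ₘ m = m + {a}
    rw [add_comm, Multiset.singleton_add]

theorem sprod_cons_top (a : Fin n) (m : Multiset (Fin n)) (h : ∀ x ∈ m, x ≤ a) :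
    sprod n (a ::ₘ m) = sprod n m * jm n a := by
  rw [sprod, sort_cons_top a m h, List.map_append, List.prod_append]
  simp [sprod]

theorem normA_list_prod_jm (hn : 1 ≤ n) (l : List (Fin n)) :
    normA ((l.map (jm n)).prod) ≤ ((n : ℝ) - 1) ^ l.length := by
  induction l with
  | nil => simp [normA_one]
  | cons a l ih =>
    rw [List.map_cons, List.prod_cons, List.length_cons, pow_succ']
    refine (normA_mul_le _ _).trans ?_
    have h1 : normA (jm n a) ≤ (n : ℝ) - 1 := by
      refine (normA_jm a).trans ?_
      have : (a : ℕ) ≤ n - 1 := Nat.le_sub_one_of_lt a.is_lt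
      calc ((a : ℕ) : ℝ) ≤ ((n - 1 : ℕ) : ℝ) := by exact_mod_cast this
        _ = (n : ℝ) - 1 := by
          rw [Nat.cast_sub hn]; norm_num
    have hn1 : (0:ℝ) ≤ (n : ℝ) - 1 := by
      have : (1:ℝ) ≤ (n:ℝ) := by exact_mod_cast hn
      linarith
    exact mul_le_mul h1 ih (normA_nonneg _) hn1

theorem normA_sprod (hn : 1 ≤ n) (m : Multiset (Fin n)) :
    normA (sprod n m) ≤ ((n : ℝ) - 1) ^ (Multiset.card m) := by
  have := normA_list_prod_jm hn (Multiset.sort m (· ≤ ·))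
  rwa [Multiset.length_sort] at this

noncomputable def Spart (n m r : ℕ) : MonoidAlgebra ℂ (Equiv.Perm (Fin n)) :=
  ∑ μ : Sym (Fin n) r,
    if ∀ x ∈ (μ : Multiset (Fin n)), (x : ℕ) < m then sprod n (μ : Multiset (Fin n)) else 0

theorem Spart_full (n r : ℕ) : Spart n n r = hJM n r := by
  rw [Spart, hJM_eq]
  exact Finset.sum_congr rfl fun μ _ => if_pos fun x _ => x.is_lt

theorem Spart_zero (n m : ℕ) : Spart n m 0 = 1 := by
  rw [Spart, Fintype.sum_unique]
  rw [if_pos]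
  · show sprod n (0 : Multiset (Fin n)) = 1
    simp [sprod, Multiset.sort_zero]
  · intro x hx
    have h0 : ((default : Sym (Fin n) 0) : Multiset (Fin n)) = 0 :=
      Multiset.card_eq_zero.mp (default : Sym (Fin n) 0).2
    rw [h0] at hx
    exact absurd hx (Multiset.notMem_zero x)

theorem Spart_zero_vars (n r : ℕ) : Spart n 0 (r + 1) = 0 := by
  rw [Spart]
  refine Finset.sum_eq_zero fun μ _ => ?_
  rw [if_neg]
  intro h
  have hne : (μ : Multiset (Fin n)) ≠ 0 := by
    intro h0
    have h2 : Multiset.card (μ : Multiset (Fin n)) = r + 1 := μ.2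
    rw [h0, Multiset.card_zero] at h2
    exact absurd h2.symm (Nat.succ_ne_zero r)
  obtain ⟨x, hx⟩ := Multiset.exists_mem_of_ne_zero hne
  exact absurd (h x hx) (Nat.not_lt_zero _)

theorem Spart_succ {m : ℕ} (hm : m < n) (r : ℕ) :
    Spart n (m + 1) (r + 1) = Spart n m (r + 1) + Spart n (m + 1) r * jm n ⟨m, hm⟩ := by
  classical
  set top : Fin n := ⟨m, hm⟩ with htop
  set f : Sym (Fin n) (r+1) → MonoidAlgebra ℂ (Equiv.Perm (Fin n)) := fun μ =>
    if ∀ x ∈ (μ : Multiset (Fin n)), (x : ℕ) < m + 1 then sprod n (μ : Multiset (Fin n)) else 0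
    with hf
  have hsplit : Spart n (m+1) (r+1)
      = (∑ μ ∈ Finset.univ.filter (fun μ : Sym (Fin n) (r+1) => top ∈ (μ : Multiset (Fin n))), f μ)
      + ∑ μ ∈ Finset.univ.filter (fun μ : Sym (Fin n) (r+1) => ¬ top ∈ (μ : Multiset (Fin n))), f μ :=
    (Finset.sum_filter_add_sum_filter_not _ _ _).symm
  have hnot : ∑ μ ∈ Finset.univ.filter
      (fun μ : Sym (Fin n) (r+1) => ¬ top ∈ (μ : Multiset (Fin n))), f μ = Spart n m (r + 1) := by
    rw [Spart, ← Finset.sum_filter_add_sum_filter_not (Finset.univ : Finset (Sym (Fin n) (r+1)))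
      (fun μ => top ∈ (μ : Multiset (Fin n)))]
    have h1 : ∑ μ ∈ Finset.univ.filter
        (fun μ : Sym (Fin n) (r+1) => top ∈ (μ : Multiset (Fin n))),
        (if ∀ x ∈ (μ : Multiset (Fin n)), (x : ℕ) < m then sprod n (μ : Multiset (Fin n)) else 0)
        = 0 := by
      refine Finset.sum_eq_zero fun μ hμ => ?_
      rw [Finset.mem_filter] at hμ
      rw [if_neg]
      intro h
      exact absurd (h top hμ.2) (by simp [htop])
    rw [h1, zero_add]
    refine Finset.sum_congr rfl fun μ hμ => ?_
    rw [Finset.mem_filter] at hμ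
    rw [hf]
    refine if_congr ⟨fun h x hx => ?_, fun h x hx => Nat.lt_succ_of_lt (h x hx)⟩ rfl rfl
    rcases Nat.lt_succ_iff_lt_or_eq.mp (h x hx) with h' | h'
    · exact h'
    · exact absurd (by rw [htop]; exact Fin.ext h' : x = top) (fun he => hμ.2 (he ▸ hx))
  have hmem : ∑ μ ∈ Finset.univ.filter
      (fun μ : Sym (Fin n) (r+1) => top ∈ (μ : Multiset (Fin n))), f μ
      = Spart n (m + 1) r * jm n top := by
    rw [Spart, Finset.sum_mul]
    have term_eq : ∀ ν : Sym (Fin n) r,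
        f (top ::ₛ ν) = (if ∀ x ∈ (ν : Multiset (Fin n)), (x : ℕ) < m + 1
          then sprod n (ν : Multiset (Fin n)) else 0) * jm n top := by
      intro ν
      rw [hf]
      simp only
      rw [ite_mul, zero_mul, Sym.coe_cons]
      have hiff : (∀ x ∈ top ::ₘ (ν : Multiset (Fin n)), (x : ℕ) < m + 1)
          ↔ (∀ x ∈ (ν : Multiset (Fin n)), (x : ℕ) < m + 1) := by
        constructor
        · intro h x hx
          exact h x (Multiset.mem_cons_of_mem hx)
        · intro h x hx
          rcases Multiset.mem_cons.mp hx with rfl | hx'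
          · exact Nat.lt_succ_self m
          · exact h x hx'
      by_cases hq : ∀ x ∈ (ν : Multiset (Fin n)), (x : ℕ) < m + 1
      · rw [if_pos (hiff.mpr hq), if_pos hq]
        refine sprod_cons_top top _ fun x hx => ?_
        rw [Fin.le_def]
        exact Nat.lt_succ_iff.mp (hq x hx)
      · rw [if_neg (fun hp => hq (hiff.mp hp)), if_neg hq]
    refine Finset.sum_bij'
      (fun μ hμ => Sym.erase μ top (Sym.mem_coe.mp (Finset.mem_filter.mp hμ).2))
      (fun μ' _ => top ::ₛ μ') ?_ ?_ ?_ ?_ ?_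
    · intro μ hμ; exact Finset.mem_univ _
    · intro μ' hμ'
      rw [Finset.mem_filter]
      refine ⟨Finset.mem_univ _, ?_⟩
      rw [Sym.coe_cons]
      exact Multiset.mem_cons_self _ _
    · intro μ hμ; exact Sym.cons_erase _
    · intro μ' hμ'; exact Sym.erase_cons_head _ _ _
    · intro μ hμ
      calc f μ = f (top ::ₛ Sym.erase μ top (Sym.mem_coe.mp (Finset.mem_filter.mp hμ).2)) := by
            rw [Sym.cons_erase]
        _ = _ := term_eq _
  rw [hsplit, hmem, hnot, add_comm]

theorem normA_zero : normA (0 : MonoidAlgebra ℂ (Equiv.Perm (Fin n))) = 0 := by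
  simp [normA]

theorem normA_Spart (hn : 1 ≤ n) (m r : ℕ) :
    normA (Spart n m r) ≤ (Fintype.card (Sym (Fin n) r) : ℝ) * ((n : ℝ) - 1) ^ r := by
  rw [Spart]
  refine (normA_sum_le _ _).trans ?_
  have hb : ∀ μ : Sym (Fin n) r,
      normA (if ∀ x ∈ (μ : Multiset (Fin n)), (x : ℕ) < m
        then sprod n (μ : Multiset (Fin n)) else 0) ≤ ((n : ℝ) - 1) ^ r := by
    intro μ
    split_ifs
    · have := normA_sprod hn (μ : Multiset (Fin n))
      have h2 : Multiset.card (μ : Multiset (Fin n)) = r := μ.2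
      rwa [h2] at this
    · rw [normA_zero]
      have : (1:ℝ) ≤ (n:ℝ) := by exact_mod_cast hn
      have h0 : (0:ℝ) ≤ (n:ℝ) - 1 := by linarith
      positivity
  calc ∑ μ : Sym (Fin n) r, normA _ ≤ ∑ _μ : Sym (Fin n) r, ((n : ℝ) - 1) ^ r :=
        Finset.sum_le_sum fun μ _ => hb μ
    _ = (Fintype.card (Sym (Fin n) r) : ℝ) * ((n : ℝ) - 1) ^ r := by
        rw [Finset.sum_const, Finset.card_univ, nsmul_eq_mul]

theorem commute_jm_Spart (i : Fin n) (m r : ℕ) : Commute (jm n i) (Spart n m r) := by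
  refine Commute.sum_right _ _ _ fun μ _ => ?_
  split_ifs
  · exact commute_jm_sprod i _
  · exact Commute.zero_right _

noncomputable def PP (n : ℕ) (d : ℂ) (m : ℕ) : MonoidAlgebra ℂ (Equiv.Perm (Fin n)) :=
  (((List.finRange n).take m).map fun i =>
    d • (1 : MonoidAlgebra ℂ (Equiv.Perm (Fin n))) + jm n i).prod

theorem PP_zero (d : ℂ) : PP n d 0 = 1 := by simp [PP]

theorem PP_full (d : ℂ) : PP n d n = prodDJ n d := by
  rw [PP, prodDJ]
  congr 1
  rw [List.take_of_length_le (le_of_eq (List.length_finRange (n := n)))]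

theorem PP_succ {m : ℕ} (hm : m < n) (d : ℂ) :
    PP n d (m + 1) = PP n d m * (d • 1 + jm n ⟨m, hm⟩) := by
  rw [PP, PP, List.take_succ]
  have hgetel : (List.finRange n)[m]?.toList = [⟨m, hm⟩] := by
    rw [List.getElem?_eq_getElem (by rw [List.length_finRange]; exact hm)]
    simp
  rw [hgetel, List.map_append, List.prod_append, List.map_singleton, List.prod_singleton]

noncomputable def T (n : ℕ) (d : ℂ) (m N : ℕ) : MonoidAlgebra ℂ (Equiv.Perm (Fin n)) :=
  ∑ r ∈ Finset.range (N + 1), ((-1 : ℂ) ^ r / d ^ (m + r)) • Spart n m r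

theorem T_zero_vars (d : ℂ) (N : ℕ) : T n d 0 N = 1 := by
  rw [T, Finset.sum_range_succ']
  have h1 : ∀ r ∈ Finset.range N,
      ((-1 : ℂ) ^ (r+1) / d ^ (0 + (r+1))) • Spart n 0 (r+1) = 0 := by
    intro r _
    rw [Spart_zero_vars, smul_zero]
  rw [Finset.sum_congr rfl h1, Finset.sum_const, Spart_zero]
  simp

theorem step {m : ℕ} (hm : m < n) {d : ℂ} (hd0 : d ≠ 0) (N : ℕ) :
    (d • (1 : MonoidAlgebra ℂ (Equiv.Perm (Fin n))) + jm n ⟨m, hm⟩) * T n d (m + 1) N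
      = T n d m N + ((-1 : ℂ) ^ N / d ^ (m + 1 + N)) • (Spart n (m + 1) N * jm n ⟨m, hm⟩) := by
  have key : (d • (1 : MonoidAlgebra ℂ (Equiv.Perm (Fin n))) + jm n ⟨m, hm⟩) * T n d (m + 1) N
      = (∑ r ∈ Finset.range (N + 1), ((-1 : ℂ) ^ r / d ^ (m + r)) • Spart n (m + 1) r)
        + ∑ r ∈ Finset.range (N + 1),
            ((-1 : ℂ) ^ r / d ^ (m + 1 + r)) • (Spart n (m + 1) r * jm n ⟨m, hm⟩) := by
    rw [T, Finset.mul_sum, ← Finset.sum_add_distrib]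
    refine Finset.sum_congr rfl fun r _ => ?_
    rw [mul_smul_comm, add_mul, smul_mul_assoc, one_mul,
      (commute_jm_Spart ⟨m, hm⟩ (m+1) r).eq, smul_add, smul_smul]
    congr 2
    rw [show m + 1 + r = (m + r) + 1 from by ring, pow_succ]
    field_simp
  have ha : (∑ r ∈ Finset.range (N + 1), ((-1 : ℂ) ^ r / d ^ (m + r)) • Spart n (m + 1) r)
      = T n d m N - ∑ r ∈ Finset.range N,
          ((-1 : ℂ) ^ r / d ^ (m + 1 + r)) • (Spart n (m + 1) r * jm n ⟨m, hm⟩) := by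
    rw [Finset.sum_range_succ']
    rw [T, Finset.sum_range_succ' (fun r => ((-1 : ℂ) ^ r / d ^ (m + r)) • Spart n m r) N]
    have hs : ∀ r ∈ Finset.range N,
        ((-1 : ℂ) ^ (r+1) / d ^ (m + (r+1))) • Spart n (m + 1) (r+1)
          = ((-1 : ℂ) ^ (r+1) / d ^ (m + (r+1))) • Spart n m (r+1)
            - ((-1 : ℂ) ^ r / d ^ (m + 1 + r)) • (Spart n (m + 1) r * jm n ⟨m, hm⟩) := by
      intro r _
      rw [Spart_succ hm r, smul_add, sub_eq_add_neg]
      congr 1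
      have hc : (-1 : ℂ) ^ (r+1) / d ^ (m + (r+1)) = -((-1 : ℂ) ^ r / d ^ (m + 1 + r)) := by
        rw [pow_succ, show m + (r+1) = m + 1 + r from by ring]
        ring
      rw [hc, neg_smul]
    rw [Finset.sum_congr rfl hs, Finset.sum_sub_distrib, Spart_zero, Spart_zero]
    abel
  rw [key, ha, Finset.sum_range_succ]
  abel

theorem normA_jm' (hn : 1 ≤ n) (i : Fin n) : normA (jm n i) ≤ (n : ℝ) - 1 := by
  refine (normA_jm i).trans ?_
  have : (i : ℕ) ≤ n - 1 := Nat.le_sub_one_of_lt i.is_lt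
  calc ((i : ℕ) : ℝ) ≤ ((n - 1 : ℕ) : ℝ) := by exact_mod_cast this
    _ = (n : ℝ) - 1 := by rw [Nat.cast_sub hn]; norm_num

theorem normA_factor (hn : 1 ≤ n) (d : ℂ) (i : Fin n) :
    normA (d • (1 : MonoidAlgebra ℂ (Equiv.Perm (Fin n))) + jm n i)
      ≤ ‖d‖ + ((n : ℝ) - 1) := by
  refine (normA_add_le _ _).trans ?_
  rw [normA_smul, normA_one, mul_one]
  exact add_le_add le_rfl (normA_jm' hn i)

theorem normA_PP (hn : 1 ≤ n) (d : ℂ) : ∀ m, m ≤ n →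
    normA (PP n d m) ≤ (‖d‖ + ((n : ℝ) - 1)) ^ m := by
  intro m
  induction m with
  | zero => intro _; rw [PP_zero, normA_one, pow_zero]
  | succ m ih =>
    intro hm1
    have hm : m < n := hm1
    rw [PP_succ hm, pow_succ]
    refine (normA_mul_le _ _).trans ?_
    have h1 : (1:ℝ) ≤ (n:ℝ) := by exact_mod_cast hn
    exact mul_le_mul (ih (le_of_lt hm)) (normA_factor hn d _) (normA_nonneg _)
      (pow_nonneg (by linarith [norm_nonneg d]) _)

noncomputable def Kb (n : ℕ) (d : ℂ) (N : ℕ) : ℝ :=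
  (‖d‖ + ((n : ℝ) - 1)) ^ n * ((Fintype.card (Sym (Fin n) N) : ℝ) * ((n : ℝ) - 1) ^ (N + 1))
    / ‖d‖ ^ (N + 1)

theorem key_bound (hn : 1 ≤ n) {d : ℂ} (hd1 : 1 ≤ ‖d‖) (N : ℕ) :
    ∀ m, m ≤ n → normA (PP n d m * T n d m N - 1) ≤ m * Kb n d N := by
  have h1n : (1:ℝ) ≤ (n:ℝ) := by exact_mod_cast hn
  have hd0 : d ≠ 0 := by
    intro h; rw [h, norm_zero] at hd1; linarith
  have hn1 : (0:ℝ) ≤ (n:ℝ) - 1 := by linarith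
  intro m
  induction m with
  | zero =>
    intro _
    rw [PP_zero, T_zero_vars, one_mul, sub_self, normA_zero, Nat.cast_zero, zero_mul]
  | succ m ih =>
    intro hm1
    have hm : m < n := hm1
    rw [PP_succ hm, mul_assoc, step hm hd0 N, mul_add, add_sub_right_comm]
    refine (normA_add_le _ _).trans ?_
    have hterm : normA (PP n d m *
        (((-1 : ℂ) ^ N / d ^ (m + 1 + N)) • (Spart n (m + 1) N * jm n ⟨m, hm⟩)))
        ≤ Kb n d N := by
      have hc : ‖(-1 : ℂ) ^ N / d ^ (m + 1 + N)‖ = 1 / ‖d‖ ^ (m + 1 + N) := by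
        rw [norm_div, norm_pow, norm_pow, norm_neg, norm_one, one_pow]
      have hB : (1:ℝ) / ‖d‖ ^ (m + 1 + N) ≤ 1 / ‖d‖ ^ (N + 1) := by
        refine one_div_le_one_div_of_le (by positivity) ?_
        exact pow_le_pow_right₀ hd1 (by omega)
      have hA : normA (PP n d m) ≤ (‖d‖ + ((n : ℝ) - 1)) ^ n := by
        refine (normA_PP hn d m (le_of_lt hm)).trans ?_
        exact pow_le_pow_right₀ (by linarith) (le_of_lt hm)
      have hE : normA (Spart n (m + 1) N * jm n ⟨m, hm⟩)
          ≤ (Fintype.card (Sym (Fin n) N) : ℝ) * ((n : ℝ) - 1) ^ (N + 1) := by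
        refine (normA_mul_le _ _).trans ?_
        rw [pow_succ, ← mul_assoc]
        exact mul_le_mul (normA_Spart hn (m+1) N) (normA_jm' hn _) (normA_nonneg _)
          (mul_nonneg (Nat.cast_nonneg _) (pow_nonneg hn1 _))
      calc normA _ ≤ normA (PP n d m) *
            normA (((-1 : ℂ) ^ N / d ^ (m + 1 + N)) • (Spart n (m + 1) N * jm n ⟨m, hm⟩)) :=
            normA_mul_le _ _
        _ = normA (PP n d m) * ((1 / ‖d‖ ^ (m + 1 + N)) *
              normA (Spart n (m + 1) N * jm n ⟨m, hm⟩)) := by rw [normA_smul, hc]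
        _ ≤ (‖d‖ + ((n : ℝ) - 1)) ^ n * ((1 / ‖d‖ ^ (N + 1)) *
              ((Fintype.card (Sym (Fin n) N) : ℝ) * ((n : ℝ) - 1) ^ (N + 1))) := by
            refine mul_le_mul hA ?_ ?_ ?_
            · exact mul_le_mul hB hE (normA_nonneg _) (by positivity)
            · exact mul_nonneg (by positivity) (normA_nonneg _)
            · exact pow_nonneg (by linarith [norm_nonneg d]) _
        _ = Kb n d N := by rw [Kb]; ring
    calc normA (PP n d m * T n d m N - 1) + normA _ ≤ m * Kb n d N + Kb n d N :=
          add_le_add (ih (le_of_lt hm)) hterm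
      _ = (m + 1 : ℕ) * Kb n d N := by push_cast; ring

theorem summable_aux (k : ℕ) {q : ℝ} (h0 : 0 ≤ q) (h1 : q < 1) :
    Summable fun r : ℕ => ((r : ℝ) + 1) ^ k * q ^ r := by
  have hq : ‖q‖ < 1 := by rwa [Real.norm_eq_abs, abs_of_nonneg h0]
  have hsum : ∀ j ∈ Finset.range (k+1),
      Summable (fun r : ℕ => ((r : ℝ) ^ j * 1 ^ (k - j) * (Nat.choose k j : ℝ)) * q ^ r) := by
    intro j _
    have := summable_pow_mul_geometric_of_norm_lt_one (R := ℝ) j hq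
    simpa [mul_comm, mul_assoc, mul_left_comm] using
      (this.mul_left ((Nat.choose k j : ℝ)))
  refine (summable_sum hsum).congr fun r => ?_
  rw [← Finset.sum_mul, ← add_pow]

theorem cardSym_le (hn : 1 ≤ n) (N : ℕ) :
    Fintype.card (Sym (Fin n) N) ≤ (n * (N + 1)) ^ (n - 1) := by
  rw [Sym.card_sym_eq_multichoose, Fintype.card_fin, Nat.multichoose_eq]
  have h1 : (n + N - 1).choose N = (n + N - 1).choose (n - 1) := by
    rw [← Nat.choose_symm (by omega : N ≤ n + N - 1)]
    congr 1
    omega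
  rw [h1]
  calc (n + N - 1).choose (n - 1) ≤ (n + N - 1) ^ (n - 1) := Nat.choose_le_pow _ _
    _ ≤ (n * (N + 1)) ^ (n - 1) := by
        refine Nat.pow_le_pow_left ?_ _
        have h2 : N ≤ n * N := Nat.le_mul_of_pos_left N hn
        calc n + N - 1 ≤ n + N := Nat.sub_le _ _
          _ ≤ n * (N + 1) := by rw [Nat.mul_succ]; omega

theorem cardSym_le' (hn : 1 ≤ n) (N : ℕ) :
    (Fintype.card (Sym (Fin n) N) : ℝ) ≤ (n : ℝ) ^ (n - 1) * ((N : ℝ) + 1) ^ (n - 1) := by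
  have := cardSym_le hn N
  calc (Fintype.card (Sym (Fin n) N) : ℝ) ≤ ((n * (N + 1)) ^ (n - 1) : ℕ) := by exact_mod_cast this
    _ = (n : ℝ) ^ (n - 1) * ((N : ℝ) + 1) ^ (n - 1) := by
        push_cast [mul_pow]
        ring

theorem norm_coeff_hJM_le (hn : 1 ≤ n) (r : ℕ) (τ : Equiv.Perm (Fin n)) :
    ‖(hJM n r).coeff τ‖ ≤ (n : ℝ) ^ (n - 1) * ((r : ℝ) + 1) ^ (n - 1) * ((n : ℝ) - 1) ^ r := by
  have h1n : (1:ℝ) ≤ (n:ℝ) := by exact_mod_cast hn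
  have hn1 : (0:ℝ) ≤ (n:ℝ) - 1 := by linarith
  calc ‖(hJM n r).coeff τ‖ ≤ normA (hJM n r) := apply_le_normA _ _
    _ = normA (Spart n n r) := by rw [Spart_full]
    _ ≤ (Fintype.card (Sym (Fin n) r) : ℝ) * ((n : ℝ) - 1) ^ r := normA_Spart hn n r
    _ ≤ (n : ℝ) ^ (n - 1) * ((r : ℝ) + 1) ^ (n - 1) * ((n : ℝ) - 1) ^ r := by
        exact mul_le_mul_of_nonneg_right (cardSym_le' hn r) (pow_nonneg hn1 _)

theorem summable_f (hn : 1 ≤ n) {d : ℕ} (hd : n ≤ d) (τ : Equiv.Perm (Fin n)) :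
    Summable (fun r : ℕ => ((-1 : ℂ) ^ r * (hJM n r).coeff τ) / (d : ℂ) ^ (n + r)) := by
  have h1n : (1:ℝ) ≤ (n:ℝ) := by exact_mod_cast hn
  have hn1 : (0:ℝ) ≤ (n:ℝ) - 1 := by linarith
  have hdn : (n : ℝ) ≤ (d : ℝ) := by exact_mod_cast hd
  have hdpos : (0:ℝ) < (d : ℝ) := by linarith
  set q : ℝ := ((n : ℝ) - 1) / d with hq
  have hq0 : 0 ≤ q := by positivity
  have hq1 : q < 1 := by
    rw [hq, div_lt_one hdpos]
    linarith
  refine Summable.of_norm_bounded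
    (((summable_aux (n-1) hq0 hq1).mul_left ((n : ℝ) ^ (n - 1) / (d : ℝ) ^ n))) fun r => ?_
  rw [norm_div, norm_mul, norm_pow, norm_pow, norm_neg, norm_one, one_pow, one_mul,
    Complex.norm_natCast]
  have hd0 : (d : ℝ) ≠ 0 := ne_of_gt hdpos
  calc ‖(hJM n r).coeff τ‖ / (d : ℝ) ^ (n + r)
      ≤ ((n : ℝ) ^ (n - 1) * ((r : ℝ) + 1) ^ (n - 1) * ((n : ℝ) - 1) ^ r) / (d : ℝ) ^ (n + r) := by
        have hb := norm_coeff_hJM_le hn r τ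
        gcongr
    _ = (n : ℝ) ^ (n - 1) / (d : ℝ) ^ n * (((r : ℝ) + 1) ^ (n - 1) * q ^ r) := by
        rw [hq, div_pow, pow_add]
        field_simp

theorem tendsto_nKb (hn : 1 ≤ n) {d : ℕ} (hd : n ≤ d) :
    Filter.Tendsto (fun N => (n : ℝ) * Kb n (d : ℂ) N) Filter.atTop (nhds 0) := by
  have h1n : (1:ℝ) ≤ (n:ℝ) := by exact_mod_cast hn
  have hn1 : (0:ℝ) ≤ (n:ℝ) - 1 := by linarith
  have hdn : (n : ℝ) ≤ (d : ℝ) := by exact_mod_cast hd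
  have hdpos : (0:ℝ) < (d : ℝ) := by linarith
  have hd0 : (d : ℝ) ≠ 0 := ne_of_gt hdpos
  have hnorm : ‖(d : ℂ)‖ = (d : ℝ) := Complex.norm_natCast d
  set q : ℝ := ((n : ℝ) - 1) / d with hq
  have hq0 : 0 ≤ q := by positivity
  have hq1 : q < 1 := by rw [hq, div_lt_one hdpos]; linarith
  set A0 : ℝ := ((d : ℝ) + ((n : ℝ) - 1)) ^ n with hA0
  have hA0pos : 0 ≤ A0 := pow_nonneg (by linarith) _
  set C : ℝ := (n : ℝ) * A0 * (n : ℝ) ^ (n - 1) * q with hC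
  have hbound : ∀ N, (n : ℝ) * Kb n (d : ℂ) N ≤ C * (((N : ℝ) + 1) ^ (n - 1) * q ^ N) := by
    intro N
    rw [Kb, hnorm]
    calc (n:ℝ) * (A0 * ((Fintype.card (Sym (Fin n) N) : ℝ) * ((n : ℝ) - 1) ^ (N + 1))
          / (d : ℝ) ^ (N + 1))
        ≤ (n:ℝ) * (A0 * (((n : ℝ) ^ (n - 1) * ((N : ℝ) + 1) ^ (n - 1)) * ((n : ℝ) - 1) ^ (N + 1))
          / (d : ℝ) ^ (N + 1)) := by
          have := cardSym_le' hn N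
          gcongr
      _ = C * (((N : ℝ) + 1) ^ (n - 1) * q ^ N) := by
          rw [hC, hq, div_pow, pow_succ, pow_succ]
          field_simp
  have hKb0 : ∀ N, 0 ≤ (n : ℝ) * Kb n (d : ℂ) N := by
    intro N
    rw [Kb, hnorm]
    have : (0:ℝ) ≤ (Fintype.card (Sym (Fin n) N) : ℝ) * ((n : ℝ) - 1) ^ (N + 1) :=
      mul_nonneg (Nat.cast_nonneg _) (pow_nonneg hn1 _)
    positivity
  have htend : Filter.Tendsto (fun N : ℕ => C * (((N : ℝ) + 1) ^ (n - 1) * q ^ N))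
      Filter.atTop (nhds 0) := by
    have := (summable_aux (n - 1) hq0 hq1).tendsto_atTop_zero
    simpa using this.const_mul C
  exact squeeze_zero hKb0 hbound htend

theorem commute_prodDJ_T (d : ℂ) (N : ℕ) : Commute (prodDJ n d) (T n d n N) := by
  rw [prodDJ]
  refine Commute.list_prod_left _ _ fun x hx => ?_
  obtain ⟨i, _, rfl⟩ := List.mem_map.mp hx
  refine Commute.sum_right _ _ _ fun r _ => ?_
  refine Commute.smul_right ?_ _
  exact Commute.add_left (Commute.smul_left (Commute.one_left _) d) (commute_jm_Spart i n r)


/-- For every integer `d ≥ n` and `σ ∈ S_n`, the series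
`Σ_{r≥0} (−1)^r h_r(J_1,…,J_n)(σ) / d^{n+r}` converges to the coefficient of `σ` in
`(∏_{i=1}^n (d·1 + J_i))⁻¹`; i.e. the coefficients of the `1/d`-expansion of the
Weingarten function are `a_r = (−1)^r h_r(J_1,…,J_n)`. -/
theorem weingarten_asymptotic_expansion (n : ℕ) (hn : 1 ≤ n) (d : ℕ) (hd : n ≤ d)
    (σ : Equiv.Perm (Fin n)) :
    HasSum (fun r : ℕ => ((-1 : ℂ) ^ r * (hJM n r).coeff σ) / (d : ℂ) ^ (n + r))
      ((Ring.inverse (prodDJ n d)).coeff σ) := by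
  have h1n : (1:ℝ) ≤ (n:ℝ) := by exact_mod_cast hn
  have hd1 : 1 ≤ ‖(d : ℂ)‖ := by
    rw [Complex.norm_natCast]
    exact_mod_cast hn.trans hd
  set f : Equiv.Perm (Fin n) → ℕ → ℂ :=
    fun τ r => ((-1 : ℂ) ^ r * (hJM n r).coeff τ) / (d : ℂ) ^ (n + r) with hf
  have hsumm : ∀ τ, Summable (f τ) := fun τ => summable_f hn hd τ
  set Y : MonoidAlgebra ℂ (Equiv.Perm (Fin n)) :=
    MonoidAlgebra.ofCoeff (Finsupp.equivFunOnFinite.symm (fun τ => ∑' r, f τ r)) with hYdef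
  have hY : ∀ τ, Y.coeff τ = ∑' r, f τ r := fun τ => rfl
  -- coefficients of truncations
  have hTapp : ∀ (τ : Equiv.Perm (Fin n)) (N : ℕ),
      (T n (d : ℂ) n N).coeff τ = ∑ r ∈ Finset.range (N + 1), f τ r := by
    intro τ N
    rw [T, MonoidAlgebra.coeff_sum, Finsupp.finset_sum_apply]
    refine Finset.sum_congr rfl fun r _ => ?_
    rw [Spart_full, MonoidAlgebra.coeff_smul_apply, smul_eq_mul, hf]
    ring
  have htendT : ∀ τ, Filter.Tendsto (fun N => (T n (d : ℂ) n N).coeff τ)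
      Filter.atTop (nhds (Y.coeff τ)) := by
    intro τ
    have h1 := (hsumm τ).hasSum.tendsto_sum_nat
    have h2 := h1.comp (Filter.tendsto_add_atTop_nat 1)
    rw [hY τ]
    exact h2.congr fun N => (hTapp τ N).symm
  -- P * T N tends to 1 coefficientwise
  have hlim0 : ∀ g : Equiv.Perm (Fin n),
      Filter.Tendsto (fun N => (prodDJ n (d : ℂ) * T n (d : ℂ) n N).coeff g)
        Filter.atTop (nhds ((1 : MonoidAlgebra ℂ (Equiv.Perm (Fin n))).coeff g)) := by
    intro g
    rw [tendsto_iff_norm_sub_tendsto_zero]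
    refine squeeze_zero (fun N => norm_nonneg _) (g := fun N => (n : ℝ) * Kb n (d : ℂ) N)
      (fun N => ?_) (tendsto_nKb hn hd)
    have h1 : (prodDJ n (d : ℂ) * T n (d : ℂ) n N).coeff g
        - (1 : MonoidAlgebra ℂ (Equiv.Perm (Fin n))).coeff g
        = (prodDJ n (d : ℂ) * T n (d : ℂ) n N - 1).coeff g := by
      rw [MonoidAlgebra.coeff_sub, Finsupp.sub_apply]
    rw [h1]
    refine (apply_le_normA _ _).trans ?_
    have := key_bound hn hd1 N n le_rfl
    rwa [PP_full] at this
  have hlim1 : ∀ g : Equiv.Perm (Fin n),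
      Filter.Tendsto (fun N => (prodDJ n (d : ℂ) * T n (d : ℂ) n N).coeff g)
        Filter.atTop (nhds ((prodDJ n (d : ℂ) * Y).coeff g)) := by
    intro g
    rw [mul_apply_univ]
    refine Filter.Tendsto.congr (fun N => (mul_apply_univ _ _ g).symm) ?_
    exact tendsto_finset_sum _ fun τ _ => (htendT (τ⁻¹ * g)).const_mul _
  have hlim2 : ∀ g : Equiv.Perm (Fin n),
      Filter.Tendsto (fun N => (prodDJ n (d : ℂ) * T n (d : ℂ) n N).coeff g)
        Filter.atTop (nhds ((Y * prodDJ n (d : ℂ)).coeff g)) := by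
    intro g
    rw [mul_apply_univ]
    refine Filter.Tendsto.congr
      (f₁ := fun N => ∑ τ : Equiv.Perm (Fin n),
        (T n (d : ℂ) n N).coeff τ * (prodDJ n (d : ℂ)).coeff (τ⁻¹ * g)) (fun N => ?_) ?_
    · show ∑ τ : Equiv.Perm (Fin n), (T n (d : ℂ) n N).coeff τ * (prodDJ n (d : ℂ)).coeff (τ⁻¹ * g) = _
      rw [← mul_apply_univ, ← (commute_prodDJ_T (d : ℂ) N).eq]
    · exact tendsto_finset_sum _ fun τ _ => (htendT τ).mul_const _
  have hP1 : prodDJ n (d : ℂ) * Y = 1 :=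
    MonoidAlgebra.ext (Finsupp.ext fun g => tendsto_nhds_unique (hlim1 g) (hlim0 g))
  have hP2 : Y * prodDJ n (d : ℂ) = 1 :=
    MonoidAlgebra.ext (Finsupp.ext fun g => tendsto_nhds_unique (hlim2 g) (hlim0 g))
  have hinv : Ring.inverse (prodDJ n (d : ℂ)) = Y := by
    have : Ring.inverse ((⟨prodDJ n (d : ℂ), Y, hP1, hP2⟩ :
        (MonoidAlgebra ℂ (Equiv.Perm (Fin n)))ˣ) : MonoidAlgebra ℂ (Equiv.Perm (Fin n))) = Y :=
      Ring.inverse_unit _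
    exact this
  rw [hinv, hY σ]
  exact (hsumm σ).hasSum
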